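/- For 0 < a ≤ c, the derivative of erf(a·y)/erf(c·y) with respect to y equals (2/(√π·y))·(erf(a·y)/erf(c·y))·(a·y·e^{-a²y²}/erf(a·y) − c·y·e^{-c²y²}/erf(c·y)), and this derivative is nonnegative for all y > 0. -/

import Mathlib

open Real

noncomputable def erf (x : ℝ) : ℝ := (2 / Real.sqrt Real.pi) * ∫ t in (0:ℝ)..x, Real.exp (-t^2)

lemma cont_gauss : Continuous (fun t : ℝ => Real.exp (-t^2)) := by fun_prop

lemma F_pos {x : ℝ} (hx : 0 < x) : 0 < ∫ t in (0:ℝ)..x, Real.exp (-t^2) := by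
  apply intervalIntegral.intervalIntegral_pos_of_pos_on
    (cont_gauss.intervalIntegrable 0 x)
  · intro t _
    exact (Real.exp_pos _)
  · exact hx

lemma erf_pos {x : ℝ} (hx : 0 < x) : 0 < erf x := by
  unfold erf
  have h1 : 0 < Real.sqrt Real.pi := Real.sqrt_pos.mpr Real.pi_pos
  exact mul_pos (by positivity) (F_pos hx)

lemma hasDerivAt_erf (x : ℝ) :
    HasDerivAt erf ((2 / Real.sqrt Real.pi) * Real.exp (-x^2)) x := by
  have h : HasDerivAt (fun u => ∫ t in (0:ℝ)..u, Real.exp (-t^2)) (Real.exp (-x^2)) x := by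
    exact intervalIntegral.integral_hasDerivAt_right
      (cont_gauss.intervalIntegrable 0 x)
      (cont_gauss.stronglyMeasurableAtFilter _ _)
      cont_gauss.continuousAt
  exact h.const_mul (2 / Real.sqrt Real.pi)

lemma F_scaled (x : ℝ) (hx : x ≠ 0) :
    (∫ t in (0:ℝ)..x, Real.exp (-t^2)) = x * ∫ s in (0:ℝ)..1, Real.exp (-(x*s)^2) := by
  have := intervalIntegral.integral_comp_mul_left (fun t => Real.exp (-t^2)) (a := (0:ℝ))
    (b := (1:ℝ)) (c := x)
  rw [this hx]
  rw [mul_zero, mul_one, smul_eq_mul, ← mul_assoc, mul_inv_cancel₀ hx, one_mul]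

lemma key (u v : ℝ) (hu : 0 < u) (huv : u ≤ v) :
    v * Real.exp (-v^2) * erf u ≤ u * Real.exp (-u^2) * erf v := by
  have hv : 0 < v := lt_of_lt_of_le hu huv
  have hint : ∫ s in (0:ℝ)..1, Real.exp (-v^2) * Real.exp (-(u*s)^2)
      ≤ ∫ s in (0:ℝ)..1, Real.exp (-u^2) * Real.exp (-(v*s)^2) := by
    apply intervalIntegral.integral_mono_on (by norm_num)
      (by apply Continuous.intervalIntegrable; fun_prop)
      (by apply Continuous.intervalIntegrable; fun_prop)
    intro s hs
    rw [← Real.exp_add, ← Real.exp_add]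
    apply Real.exp_le_exp.mpr
    have hs0 : 0 ≤ s := hs.1
    have hs1 : s ≤ 1 := hs.2
    have h : 0 ≤ (v^2 - u^2) * (1 - s^2) :=
      mul_nonneg (by nlinarith) (by nlinarith)
    nlinarith [h]
  have h1 : (∫ s in (0:ℝ)..1, Real.exp (-v^2) * Real.exp (-(u*s)^2))
      = Real.exp (-v^2) * ∫ s in (0:ℝ)..1, Real.exp (-(u*s)^2) :=
    intervalIntegral.integral_const_mul _ _
  have h2 : (∫ s in (0:ℝ)..1, Real.exp (-u^2) * Real.exp (-(v*s)^2))
      = Real.exp (-u^2) * ∫ s in (0:ℝ)..1, Real.exp (-(v*s)^2) :=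
    intervalIntegral.integral_const_mul _ _
  rw [h1, h2] at hint
  have hsp : 0 < Real.sqrt Real.pi := Real.sqrt_pos.mpr Real.pi_pos
  unfold erf
  rw [F_scaled u hu.ne', F_scaled v hv.ne']
  have huv' : 0 ≤ u * v := by positivity
  have hC : 0 ≤ 2 / Real.sqrt Real.pi := by positivity
  calc v * Real.exp (-v^2) * ((2 / Real.sqrt Real.pi) * (u * ∫ s in (0:ℝ)..1, Real.exp (-(u*s)^2)))
      = (2 / Real.sqrt Real.pi) * (u * v) * (Real.exp (-v^2) * ∫ s in (0:ℝ)..1, Real.exp (-(u*s)^2)) := by ring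
    _ ≤ (2 / Real.sqrt Real.pi) * (u * v) * (Real.exp (-u^2) * ∫ s in (0:ℝ)..1, Real.exp (-(v*s)^2)) := by
        apply mul_le_mul_of_nonneg_left hint (by positivity)
    _ = u * Real.exp (-u^2) * ((2 / Real.sqrt Real.pi) * (v * ∫ s in (0:ℝ)..1, Real.exp (-(v*s)^2))) := by ring

theorem ratio_deriv (a c : ℝ) (ha : 0 < a) (hac : a ≤ c) :
    ∀ y : ℝ, 0 < y →
      HasDerivAt (fun y : ℝ => erf (a*y) / erf (c*y))
        ((2 / (Real.sqrt Real.pi * y)) * (erf (a*y) / erf (c*y)) *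
          (a * y * Real.exp (-(a^2 * y^2)) / erf (a*y) -
            c * y * Real.exp (-(c^2 * y^2)) / erf (c*y))) y ∧
      0 ≤ (2 / (Real.sqrt Real.pi * y)) * (erf (a*y) / erf (c*y)) *
          (a * y * Real.exp (-(a^2 * y^2)) / erf (a*y) -
            c * y * Real.exp (-(c^2 * y^2)) / erf (c*y)) := by
  intro y hy
  have hc : 0 < c := lt_of_lt_of_le ha hac
  have hay : 0 < a * y := by positivity
  have hcy : 0 < c * y := by positivity
  have heay := erf_pos hay
  have hecy := erf_pos hcy
  have hsp : 0 < Real.sqrt Real.pi := Real.sqrt_pos.mpr Real.pi_pos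
  constructor
  · have h1 : HasDerivAt (fun y : ℝ => erf (a*y))
        ((2 / Real.sqrt Real.pi) * Real.exp (-(a*y)^2) * a) y :=
by
      have hm : HasDerivAt (fun y : ℝ => a * y) a y := by
        simpa using (hasDerivAt_id y).const_mul a
      exact (hasDerivAt_erf (a*y)).comp y hm
    have h2 : HasDerivAt (fun y : ℝ => erf (c*y))
        ((2 / Real.sqrt Real.pi) * Real.exp (-(c*y)^2) * c) y :=
by
      have hm : HasDerivAt (fun y : ℝ => c * y) c y := by
        simpa using (hasDerivAt_id y).const_mul c
      exact (hasDerivAt_erf (c*y)).comp y hm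
    have hd := h1.div h2 hecy.ne'
    refine HasDerivAt.congr_deriv hd ?_
    have h1 : (-(a*y)^2) = -(a^2*y^2) := by ring
    have h2 : (-(c*y)^2) = -(c^2*y^2) := by ring
    rw [← h1, ← h2]
    field_simp [hecy.ne', heay.ne', hsp.ne', hy.ne', (show erf (y*c) ≠ 0 by rw [mul_comm]; exact hecy.ne')]
  · have hkey := key (a*y) (c*y) hay (by nlinarith)
    have hdiff : 0 ≤ a * y * Real.exp (-(a^2 * y^2)) / erf (a*y) -
        c * y * Real.exp (-(c^2 * y^2)) / erf (c*y) := by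
      rw [sub_nonneg, div_le_div_iff₀ hecy heay]
      have h1 : (-(a^2*y^2)) = -(a*y)^2 := by ring
      have h2 : (-(c^2*y^2)) = -(c*y)^2 := by ring
      rw [h1, h2]
      linarith [hkey]
    have : 0 < (2 / (Real.sqrt Real.pi * y)) * (erf (a*y) / erf (c*y)) := by positivity
    positivity
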